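/- Let ν be an infinite regular cardinal with ν^{<ν} = ν. For every ν-Baire subset A of ν^ν, the Banach–Mazur game G_ν(A) of length ν is determined: either player I or player II has a winning strategy in G_ν(A). -/

import Mathlib

universe u

noncomputable section

/-! ## Sequences of ordinals

`SeqLT o v` is the set `v^{<o}` of all sequences of ordinals `< v` of length `< o`
(for `o > 0`; values beyond the length are normalized to `0`).
`SeqFull o v` is the generalized Baire space `v^o` of all functions from ordinals `< o`
to ordinals `< v`. -/

/-- An element of `v^{<o}`: a sequence of ordinals `< v` of length `< o`. -/
structure SeqLT (o v : Ordinal.{u}) : Type (u + 1) where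
  len : Ordinal.{u}
  len_lt : len < o ⊔ 1
  val : Ordinal.{u} → Ordinal.{u}
  val_lt : ∀ β, β < len → val β < v
  val_zero : ∀ β, len ≤ β → val β = 0

namespace SeqLT

variable {o v : Ordinal.{u}}

/-- `s ⊆ t`, i.e. `t` end-extends `s`. -/
protected def le (s t : SeqLT o v) : Prop :=
  s.len ≤ t.len ∧ ∀ β, β < s.len → s.val β = t.val β

/-- `s ⊊ t`, i.e. `t` properly end-extends `s`. -/
protected def slt (s t : SeqLT o v) : Prop :=
  s.le t ∧ s.len < t.len

/-- The empty sequence. -/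
protected def empty (o v : Ordinal.{u}) : SeqLT o v where
  len := 0
  len_lt := lt_sup_iff.mpr (Or.inr zero_lt_one)
  val := fun _ => 0
  val_lt := fun β h => absurd h (not_lt_of_ge (show (0 : Ordinal.{u}) ≤ β from zero_le))
  val_zero := fun _ _ => rfl

/-- `s⌢⟨β⟩`: the sequence `s` extended by the single value `β`. -/
def snoc (s : SeqLT o v) (β : Ordinal.{u}) : SeqLT o v :=
  if h : s.len + 1 < o ⊔ 1 ∧ β < v then
    { len := s.len + 1
      len_lt := h.1
      val := fun γ => if γ = s.len then β else s.val γ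
      val_lt := fun γ hγ => by
        rcases eq_or_ne γ s.len with rfl | hne
        · simpa using h.2
        · simp only [if_neg hne]
          refine s.val_lt γ (lt_of_le_of_ne ?_ hne)
          rw [Ordinal.add_one_eq_succ] at hγ
          exact Order.lt_succ_iff.mp hγ
      val_zero := fun γ hγ => by
        have h1 : s.len < γ :=
          lt_of_lt_of_le (by rw [Ordinal.add_one_eq_succ]; exact Order.lt_succ s.len) hγ
        simp only [if_neg h1.ne']
        exact s.val_zero γ h1.le }
  else s

protected theorem le_refl (s : SeqLT o v) : s.le s :=
  ⟨le_rfl, fun _ _ => rfl⟩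

protected theorem le_trans {s t u : SeqLT o v} (h1 : s.le t) (h2 : t.le u) : s.le u :=
  ⟨h1.1.trans h2.1, fun β hβ => (h1.2 β hβ).trans (h2.2 β (lt_of_lt_of_le hβ h1.1))⟩

end SeqLT

/-- An element of the generalized Baire space `v^o`. -/
structure SeqFull (o v : Ordinal.{u}) : Type (u + 1) where
  val : Ordinal.{u} → Ordinal.{u}
  val_lt : ∀ β, β < o → val β < v
  val_zero : ∀ β, o ≤ β → val β = 0

/-- The restriction `x ↾ β` of `x : v^o` to an ordinal `β < o`. -/
def SeqFull.res {o v : Ordinal.{u}} (x : SeqFull o v) (β : Ordinal.{u}) : SeqLT o v :=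
  if h : β < o ⊔ 1 then
    { len := β
      len_lt := h
      val := fun γ => if γ < β then x.val γ else 0
      val_lt := fun γ hγ => by
        simp only [if_pos hγ]
        rcases lt_sup_iff.mp h with h' | h'
        · exact x.val_lt γ (hγ.trans h')
        · rw [Ordinal.lt_one_iff_zero] at h'
          exact absurd (h' ▸ hγ) (not_lt_of_ge (show (0 : Ordinal.{u}) ≤ γ from zero_le))
      val_zero := fun γ hγ => if_neg (not_lt.mpr hγ) }
  else SeqLT.empty o v

/-- `s ⊆ x`: the sequence `s` is an initial segment of `x : v^o`. -/
def SeqLT.prefixOf {o v : Ordinal.{u}} (s : SeqLT o v) (x : SeqFull o v) : Prop :=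
  ∀ β, β < s.len → s.val β = x.val β

/-! ## The bounded topology -/

/-- The basic open set `N_t`. -/
def basicOpen {o v : Ordinal.{u}} (t : SeqLT o v) : Set (SeqFull o v) :=
  {x | t.prefixOf x}

/-- The bounded (standard) topology on the generalized Baire space, generated by the
basic open sets `N_t`. -/
instance (o v : Ordinal.{u}) : TopologicalSpace (SeqFull o v) :=
  TopologicalSpace.generateFrom {U | ∃ t : SeqLT o v, U = basicOpen t}

/-- `A` is a nowhere dense subset of `B` (in the subspace topology on `B`). -/
def NowhereDenseIn {o v : Ordinal.{u}} (A B : Set (SeqFull o v)) : Prop :=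
  A ⊆ B ∧ interior (closure {x : ↥B | (x : SeqFull o v) ∈ A}) = ∅

/-- `A` is `o`-meager in `B`: `A ∩ B` is the union of (card of) `o` many nowhere dense
subsets of `B`. -/
def MeagerIn {o v : Ordinal.{u}} (A B : Set (SeqFull o v)) : Prop :=
  ∃ F : {β : Ordinal.{u} // β < o} → Set (SeqFull o v),
    (∀ i, NowhereDenseIn (F i) B) ∧ A ∩ B = ⋃ i, F i

/-- `A` is comeager in `B`: `B \ A` is meager in `B`. -/
def ComeagerIn {o v : Ordinal.{u}} (A B : Set (SeqFull o v)) : Prop :=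
  MeagerIn (B \ A) B

/-- `A` has the `o`-Baire property: for some open `U`, `A △ U` is meager. -/
def BaireSet {o v : Ordinal.{u}} (A : Set (SeqFull o v)) : Prop :=
  ∃ U : Set (SeqFull o v), IsOpen U ∧ MeagerIn (symmDiff A U) Set.univ

/-! ## Homomorphisms of `v^{<o}` -/

/-- A homomorphism: strictly extension-preserving map of `v^{<o}` to itself. -/
def IsHom {o v : Ordinal.{u}} (f : SeqLT o v → SeqLT o v) : Prop :=
  ∀ s t : SeqLT o v, s.slt t → (f s).slt (f t)

/-- `f` is dense: for every `s` and every `t ⊇ f(s)` there is `β < v` with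
`f(s⌢⟨β⟩) ⊇ t`. -/
def IsDenseMap {o v : Ordinal.{u}} (f : SeqLT o v → SeqLT o v) : Prop :=
  ∀ s t : SeqLT o v, (f s).le t → ∃ β, β < v ∧ t.le (f (s.snoc β))

/-- `u = ⋃_{α<γ} s α` for a chain `s`. -/
def IsUnionOfChain {o v : Ordinal.{u}} (u : SeqLT o v) (γ : Ordinal.{u})
    (s : Ordinal.{u} → SeqLT o v) : Prop :=
  (∀ α, α < γ → (s α).le u) ∧ ∀ β, β < u.len → ∃ α, α < γ ∧ β < (s α).len

/-- `f` is continuous: for every limit `γ < o` and every strictly increasing sequence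
`⟨s_α : α < γ⟩`, `f(⋃_{α<γ} s_α) = ⋃_{α<γ} f(s_α)`. -/
def IsContinuousMap {o v : Ordinal.{u}} (f : SeqLT o v → SeqLT o v) : Prop :=
  ∀ γ : Ordinal.{u}, Order.IsSuccLimit γ → γ < o →
    ∀ s : Ordinal.{u} → SeqLT o v, (∀ α β, α < β → β < γ → (s α).slt (s β)) →
      ∀ u : SeqLT o v, IsUnionOfChain u γ s → IsUnionOfChain (f u) γ fun α => f (s α)

/-- `y = f*(x) = ⋃_{α<o} f(x↾α)` for a homomorphism `f`. -/
def FStarVal {o v : Ordinal.{u}} (f : SeqLT o v → SeqLT o v) (x y : SeqFull o v) : Prop :=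
  (∀ α, α < o → (f (x.res α)).prefixOf y) ∧
    ∀ β, β < o → ∃ α, α < o ∧ β < (f (x.res α)).len

/-! ## Clubs and the almost Baire property -/

/-- `C` is a club (closed unbounded set) in the ordinal `o`. -/
def IsClubIn (C : Set Ordinal.{u}) (o : Ordinal.{u}) : Prop :=
  (∀ γ ∈ C, γ < o) ∧ (∀ β, β < o → ∃ γ ∈ C, β ≤ γ) ∧
    ∀ β, β < o → 0 < β → (∀ γ, γ < β → ∃ ξ ∈ C, γ < ξ ∧ ξ < β) → β ∈ C

/-- The set of functions coding elements of the club filter as characteristic functions. -/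
def ClSet (o v : Ordinal.{u}) : Set (SeqFull o v) :=
  {x | ∃ C : Set Ordinal.{u}, IsClubIn C o ∧ ∀ i ∈ C, x.val i ≠ 0}

/-- The set of functions coding elements of the nonstationary ideal. -/
def NsSet (o v : Ordinal.{u}) : Set (SeqFull o v) :=
  {x | ∃ C : Set Ordinal.{u}, IsClubIn C o ∧ ∀ i ∈ C, x.val i = 0}

/-- `A` is almost Baire: there is a dense homomorphism `f` with `ran f* ⊆ A`, or a dense
continuous homomorphism `f` with `f ∅ = ∅` and `ran f* ⊆ Aᶜ`. -/
def AlmostBaire {o v : Ordinal.{u}} (A : Set (SeqFull o v)) : Prop :=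
  ∃ f : SeqLT o v → SeqLT o v, IsHom f ∧ IsDenseMap f ∧
    ((∀ x y, FStarVal f x y → y ∈ A) ∨
      ((∀ x y, FStarVal f x y → y ∉ A) ∧ IsContinuousMap f ∧
        f (SeqLT.empty o v) = SeqLT.empty o v))

/-! ## Banach–Mazur games of length `o`

A run of the game is a strictly increasing sequence `⟨s_α : α < o⟩` in `v^{<o}`;
player I plays at even positions (`0` and limits count as even), player II at odd ones.
In the game `G^t` the first move of player I must extend `t`; taking `t = ∅` gives the
plain Banach–Mazur game. -/

/-- `γ` is an even ordinal (`0` and limits are even). -/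
def EvenOrd (γ : Ordinal.{u}) : Prop := ∃ δ : Ordinal.{u}, γ = 2 * δ

/-- `γ` is an odd ordinal. -/
def OddOrd (γ : Ordinal.{u}) : Prop := ∃ δ : Ordinal.{u}, γ = 2 * δ + 1

/-- The moves of a (partial) run, as a function on ordinals. -/
abbrev Play (o v : Ordinal.{u}) := Ordinal.{u} → SeqLT o v

/-- A strategy: given the length of the current position and the moves so far,
produce the next move. -/
abbrev Strat (o v : Ordinal.{u}) := Ordinal.{u} → Play o v → SeqLT o v

/-- `p` is a legal partial run of length `γ` of the game `G^t`: strictly increasing moves,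
the first move extends `t`, and the moves beyond `γ` are normalized to `∅`. -/
def IsPos {o v : Ordinal.{u}} (t : SeqLT o v) (p : Play o v) (γ : Ordinal.{u}) : Prop :=
  (∀ α β, α < β → β < γ → (p α).slt (p β)) ∧ (0 < γ → t.le (p 0)) ∧
    ∀ α, γ ≤ α → p α = SeqLT.empty o v

/-- The restriction of a run to its first `γ` moves. -/
def resPlay {o v : Ordinal.{u}} (p : Play o v) (γ : Ordinal.{u}) : Play o v :=
  fun α => if α < γ then p α else SeqLT.empty o v

/-- `m` is a legal move at the position `p` of length `γ` in the game `G^t`. -/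
def MoveOK {o v : Ordinal.{u}} (t : SeqLT o v) (p : Play o v) (γ : Ordinal.{u})
    (m : SeqLT o v) : Prop :=
  (∀ α, α < γ → (p α).slt m) ∧ (γ = 0 → t.le m)

/-- `σ` is a strategy for player I in `G^t`: it assigns a legal move to every legal
position of even length. -/
def LegalI {o v : Ordinal.{u}} (t : SeqLT o v) (σ : Strat o v) : Prop :=
  ∀ γ, γ < o → EvenOrd γ → ∀ p, IsPos t p γ → MoveOK t p γ (σ γ p)

/-- `σ` is a strategy for player II in `G^t`: it assigns a legal move to every legal
position of odd length. -/
def LegalII {o v : Ordinal.{u}} (t : SeqLT o v) (σ : Strat o v) : Prop :=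
  ∀ γ, γ < o → OddOrd γ → ∀ p, IsPos t p γ → MoveOK t p γ (σ γ p)

/-- The first `γ` moves of `p` follow the strategy `σ` of player I. -/
def FollowsI {o v : Ordinal.{u}} (σ : Strat o v) (p : Play o v) (γ : Ordinal.{u}) : Prop :=
  ∀ α, α < γ → EvenOrd α → p α = σ α (resPlay p α)

/-- The first `γ` moves of `p` follow the strategy `σ` of player II. -/
def FollowsII {o v : Ordinal.{u}} (σ : Strat o v) (p : Play o v) (γ : Ordinal.{u}) : Prop :=
  ∀ α, α < γ → OddOrd α → p α = σ α (resPlay p α)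

/-- `x = ⋃_{α<o} p α` is the outcome of the complete run `p`. -/
def IsOutcome {o v : Ordinal.{u}} (p : Play o v) (x : SeqFull o v) : Prop :=
  (∀ α, α < o → (p α).prefixOf x) ∧ ∀ β, β < o → ∃ α, α < o ∧ β < (p α).len

/-- Player I has a winning strategy in the Banach–Mazur game `G^t(A)` of length `o`. -/
def WinIStrat {o v : Ordinal.{u}} (t : SeqLT o v) (A : Set (SeqFull o v)) : Prop :=
  ∃ σ : Strat o v, LegalI t σ ∧
    ∀ p : Play o v, IsPos t p o → FollowsI σ p o → ∃ x, IsOutcome p x ∧ x ∈ A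

/-- Player II has a winning strategy in the Banach–Mazur game `G^t(A)` of length `o`. -/
def WinIIStrat {o v : Ordinal.{u}} (t : SeqLT o v) (A : Set (SeqFull o v)) : Prop :=
  ∃ σ : Strat o v, LegalII t σ ∧
    ∀ p : Play o v, IsPos t p o → FollowsII σ p o → ∃ x, IsOutcome p x ∧ x ∉ A

/-- `σ` is a tactic for player II: its moves depend only on the union of the previous moves. -/
def IsTacticII {o v : Ordinal.{u}} (t : SeqLT o v) (σ : Strat o v) : Prop :=
  ∃ f : SeqLT o v → SeqLT o v, ∀ γ, γ < o → OddOrd γ → ∀ p, IsPos t p γ →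
    ∀ u, IsUnionOfChain u γ p → σ γ p = f u

/-- Player II has a winning tactic in the Banach–Mazur game `G^t(A)` of length `o`. -/
def WinIITactic {o v : Ordinal.{u}} (t : SeqLT o v) (A : Set (SeqFull o v)) : Prop :=
  ∃ σ : Strat o v, LegalII t σ ∧ IsTacticII t σ ∧
    ∀ p : Play o v, IsPos t p o → FollowsII σ p o → ∃ x, IsOutcome p x ∧ x ∉ A

/-! ## Trees and perfect sets -/

/-- A subtree of `v^{<o}`: a downwards closed set of sequences. -/
def IsSubtree {o v : Ordinal.{u}} (T : Set (SeqLT o v)) : Prop :=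
  ∀ s ∈ T, ∀ r : SeqLT o v, r.le s → r ∈ T

/-- `T` is closed: every strictly increasing sequence in `T` of length `< o` has an
upper bound in `T`. -/
def TreeClosed {o v : Ordinal.{u}} (T : Set (SeqLT o v)) : Prop :=
  ∀ γ : Ordinal.{u}, γ < o → ∀ s : Ordinal.{u} → SeqLT o v,
    (∀ α β, α < β → β < γ → (s α).slt (s β)) → (∀ α, α < γ → s α ∈ T) →
      ∃ b ∈ T, ∀ α, α < γ → (s α).le b

/-- `t` is a direct successor of `s`. -/
def IsDirectSucc {o v : Ordinal.{u}} (s t : SeqLT o v) : Prop :=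
  s.slt t ∧ t.len = s.len + 1

/-- `T` is a perfect tree: a (nonempty) closed subtree whose splitting nodes are cofinal. -/
def IsPerfectTree {o v : Ordinal.{u}} (T : Set (SeqLT o v)) : Prop :=
  T.Nonempty ∧ IsSubtree T ∧ TreeClosed T ∧
    ∀ s ∈ T, ∃ t ∈ T, s.le t ∧
      ∃ t₁ ∈ T, ∃ t₂ ∈ T, IsDirectSucc t t₁ ∧ IsDirectSucc t t₂ ∧ t₁ ≠ t₂

/-- The body `[T]` of a tree `T`: the set of branches of length `o` through `T`. -/
def treeBody {o v : Ordinal.{u}} (T : Set (SeqLT o v)) : Set (SeqFull o v) :=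
  {x | ∀ α, α < o → x.res α ∈ T}

namespace BM

open SeqLT Set

variable {o v : Ordinal.{u}}

theorem sup_eq (h1 : 1 < o) : o ⊔ 1 = o := sup_eq_left.mpr h1.le

theorem slt_trans {s t u : SeqLT o v} (h1 : s.slt t) (h2 : t.slt u) : s.slt u :=
  ⟨SeqLT.le_trans h1.1 h2.1, h1.2.trans h2.2⟩

theorem le_slt_trans {s t u : SeqLT o v} (h1 : s.le t) (h2 : t.slt u) : s.slt u :=
  ⟨SeqLT.le_trans h1 h2.1, lt_of_le_of_lt h1.1 h2.2⟩

theorem empty_le (s : SeqLT o v) : (SeqLT.empty o v).le s :=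
  ⟨zero_le, fun β hβ => absurd hβ (not_lt_of_ge (show (0 : Ordinal.{u}) ≤ β from zero_le))⟩

theorem prefix_mono {s t : SeqLT o v} {x : SeqFull o v} (hst : s.le t) (h : t.prefixOf x) :
    s.prefixOf x :=
  fun β hβ => (hst.2 β hβ).trans (h β (hβ.trans_le hst.1))

theorem le_of_prefix {s t : SeqLT o v} {x : SeqFull o v} (hs : s.prefixOf x) (ht : t.prefixOf x)
    (h : s.len ≤ t.len) : s.le t :=
  ⟨h, fun β hβ => (hs β hβ).trans (ht β (hβ.trans_le h)).symm⟩

theorem len_lt' (h1 : 1 < o) (s : SeqLT o v) : s.len < o := by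
  have := s.len_lt; rwa [sup_eq h1] at this

/-- Pad a finite-stage sequence with zeros to get a full function extending it. -/
def pad (h1 : 1 < o) (hv : 0 < v) (s : SeqLT o v) : SeqFull o v where
  val := s.val
  val_lt := fun β _ => by
    rcases lt_or_ge β s.len with h | h
    · exact s.val_lt β h
    · rw [s.val_zero β h]; exact hv
  val_zero := fun β hβ => s.val_zero β ((len_lt' h1 s).le.trans hβ)

theorem pad_mem (h1 : 1 < o) (hv : 0 < v) (s : SeqLT o v) : s.prefixOf (pad h1 hv s) :=
  fun _ _ => rfl

theorem basicOpen_empty : basicOpen (SeqLT.empty o v) = Set.univ := by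
  ext x; simp only [basicOpen, mem_setOf_eq, mem_univ, iff_true]
  exact fun β hβ => absurd hβ (not_lt_of_ge (show (0 : Ordinal.{u}) ≤ β from zero_le))

theorem basicOpen_mono {s t : SeqLT o v} (hst : s.le t) : basicOpen t ⊆ basicOpen s :=
  fun _ hx => prefix_mono hst hx

theorem isBasis (h1 : 1 < o) :
    TopologicalSpace.IsTopologicalBasis {U : Set (SeqFull o v) | ∃ t : SeqLT o v, U = basicOpen t} := by
  refine ⟨?_, ?_, rfl⟩
  · rintro U ⟨s, rfl⟩ V ⟨t, rfl⟩ x ⟨hxs, hxt⟩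
    rcases le_total s.len t.len with h | h
    · exact ⟨basicOpen t, ⟨t, rfl⟩, hxt,
        subset_inter (basicOpen_mono (le_of_prefix hxs hxt h)) subset_rfl⟩
    · exact ⟨basicOpen s, ⟨s, rfl⟩, hxs,
        subset_inter subset_rfl (basicOpen_mono (le_of_prefix hxt hxs h))⟩
  · refine subset_antisymm (subset_univ _) ?_
    intro x _
    exact ⟨basicOpen (SeqLT.empty o v), ⟨_, rfl⟩, by rw [basicOpen_empty]; exact mem_univ x⟩

theorem isOpen_basicOpen (t : SeqLT o v) : IsOpen (basicOpen t) :=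
  TopologicalSpace.isOpen_generateFrom_of_mem ⟨t, rfl⟩

theorem nwd_avoid (h1 : 1 < o) (hv : 0 < v) {F : Set (SeqFull o v)}
    (hF : NowhereDenseIn F Set.univ) (s : SeqLT o v) :
    ∃ m : SeqLT o v, s.le m ∧ basicOpen m ∩ F = ∅ := by
  by_contra hcon
  push_neg at hcon
  have hdense : basicOpen s ⊆ closure F := by
    intro x hx
    rw [mem_closure_iff]
    intro U hU hxU
    obtain ⟨V, ⟨t, rfl⟩, hxV, hVU⟩ := (isBasis h1).exists_subset_of_mem_open hxU hU
    rcases le_total s.len t.len with h | h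
    · obtain ⟨y, hy1, hy2⟩ := hcon t (le_of_prefix hx hxV h)
      exact ⟨y, hVU hy1, hy2⟩
    · obtain ⟨y, hy1, hy2⟩ := hcon s (SeqLT.le_refl s)
      exact ⟨y, hVU (basicOpen_mono (le_of_prefix hxV hx h) hy1), hy2⟩
  have h2 : (interior (closure F)).Nonempty :=
    ⟨pad h1 hv s, interior_maximal hdense (isOpen_basicOpen s) (pad_mem h1 hv s)⟩
  have h3 : interior (closure F) = ∅ := by
    have e := hF.2
    set S : Set (↥(Set.univ : Set (SeqFull o v))) := {x | (x : SeqFull o v) ∈ F} with hS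
    have himg : (Homeomorph.Set.univ (SeqFull o v)) '' S = F := by
      ext y
      constructor
      · rintro ⟨z, hz, rfl⟩; exact hz
      · intro hy; exact ⟨⟨y, mem_univ y⟩, hy, rfl⟩
    calc interior (closure F)
        = interior (closure ((Homeomorph.Set.univ (SeqFull o v)) '' S)) := by rw [himg]
      _ = (Homeomorph.Set.univ (SeqFull o v)) '' (interior (closure S)) := by
          rw [(Homeomorph.Set.univ (SeqFull o v)).image_interior,
            (Homeomorph.Set.univ (SeqFull o v)).image_closure]
      _ = ∅ := by rw [e, image_empty]
  rw [h3] at h2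
  exact not_nonempty_empty h2

end BM
namespace BM

open SeqLT Set Order
open scoped Classical

theorem lt_add_one' (a : Ordinal.{u}) : a < a + 1 := by
  rw [Ordinal.add_one_eq_succ]; exact Order.lt_succ a

variable {o v : Ordinal.{u}}

theorem snoc_spec (hlim : Order.IsSuccLimit o) (hv : 0 < v) (s : SeqLT o v) :
    (s.snoc 0).len = s.len + 1 ∧ s.slt (s.snoc 0) ∧ basicOpen (s.snoc 0) ⊆ basicOpen s := by
  have h1 : (1 : Ordinal) < o := Ordinal.one_lt_of_isSuccLimit hlim
  have hcond : s.len + 1 < o ⊔ 1 ∧ (0 : Ordinal) < v := by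
    constructor
    · rw [sup_eq h1, Ordinal.add_one_eq_succ]
      exact hlim.succ_lt (len_lt' h1 s)
    · exact hv
  have hle : s.le (s.snoc 0) := by
    unfold SeqLT.snoc
    rw [dif_pos hcond]
    refine ⟨le_of_lt (lt_add_one' s.len), fun β hβ => (if_neg (ne_of_lt hβ)).symm⟩
  have hlen : (s.snoc 0).len = s.len + 1 := by
    unfold SeqLT.snoc; rw [dif_pos hcond]
  refine ⟨hlen, ⟨hle, ?_⟩, basicOpen_mono hle⟩
  rw [hlen]; exact lt_add_one' s.len

theorem chain_val_eq {γ : Ordinal.{u}} {p : Play o v}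
    (hchain : ∀ α β, α < β → β < γ → (p α).slt (p β))
    {α₁ α₂ β : Ordinal.{u}} (h₁ : α₁ < γ) (h₂ : α₂ < γ)
    (hb₁ : β < (p α₁).len) (hb₂ : β < (p α₂).len) :
    (p α₁).val β = (p α₂).val β := by
  rcases lt_trichotomy α₁ α₂ with h | h | h
  · exact (hchain α₁ α₂ h h₂).1.2 β hb₁
  · rw [h]
  · exact ((hchain α₂ α₁ h h₁).1.2 β hb₂).symm

theorem exists_ub (h1 : 1 < o) (hv : 0 < v)
    (hreg : ∀ (γ : Ordinal.{u}) (f : Ordinal.{u} → Ordinal.{u}), γ < o →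
      (∀ α, α < γ → f α < o) → ∃ b, b < o ∧ ∀ α, α < γ → f α ≤ b)
    {γ : Ordinal.{u}} (hγ : γ < o) {p : Play o v}
    (hchain : ∀ α β, α < β → β < γ → (p α).slt (p β)) :
    ∃ w : SeqLT o v, ∀ α, α < γ → (p α).le w := by
  obtain ⟨b, hb, hub⟩ := hreg γ (fun α => (p α).len) hγ (fun α _ => len_lt' h1 (p α))
  refine ⟨{ len := b
            len_lt := by rw [sup_eq h1]; exact hb
            val := fun β => if h : ∃ α, α < γ ∧ β < (p α).len then (p h.choose).val β else 0
            val_lt := fun β hβ => by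
              by_cases h : ∃ α, α < γ ∧ β < (p α).len
              · rw [dif_pos h]; exact (p h.choose).val_lt β h.choose_spec.2
              · rw [dif_neg h]; exact hv
            val_zero := fun β hβ => by
              rw [dif_neg]
              rintro ⟨α, hα, hβ'⟩
              exact absurd (lt_of_lt_of_le hβ' ((hub α hα).trans hβ)) (lt_irrefl β) }, ?_⟩
  intro α hα
  refine ⟨hub α hα, fun β hβ => ?_⟩
  have h : ∃ α', α' < γ ∧ β < (p α').len := ⟨α, hα, hβ⟩
  simp only [dif_pos h]
  exact chain_val_eq hchain hα h.choose_spec.1 hβ h.choose_spec.2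

theorem pos_len_ge {t : SeqLT o v} {p : Play o v} (hp : IsPos t p o) :
    ∀ α, α < o → α ≤ (p α).len := by
  intro α
  induction α using Ordinal.induction with
  | h α IH =>
    intro hα
    refine le_of_forall_lt fun β hβ => ?_
    exact lt_of_le_of_lt (IH β hβ (hβ.trans hα)) (hp.1 β α hβ hα).2

theorem exists_outcome (hlim : Order.IsSuccLimit o) {t : SeqLT o v} {p : Play o v} (hp : IsPos t p o) :
    ∃ x : SeqFull o v, IsOutcome p x := by
  have h1 : (1 : Ordinal) < o := Ordinal.one_lt_of_isSuccLimit hlim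
  have hcof : ∀ β, β < o → ∃ α, α < o ∧ β < (p α).len := by
    intro β hβ
    have hs : β + 1 < o := by rw [Ordinal.add_one_eq_succ]; exact hlim.succ_lt hβ
    refine ⟨β + 1, hs, lt_of_le_of_lt (pos_len_ge hp β hβ) ?_⟩
    exact (hp.1 β (β + 1) (lt_add_one' β) hs).2
  refine ⟨{ val := fun β => if h : ∃ α, α < o ∧ β < (p α).len then (p h.choose).val β else 0
            val_lt := fun β hβ => by
              rw [dif_pos (hcof β hβ)]
              exact (p _).val_lt β (hcof β hβ).choose_spec.2
            val_zero := fun β hβ => by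
              rw [dif_neg]
              rintro ⟨α, hα, hβ'⟩
              exact absurd (hβ.trans_lt (hβ'.trans (len_lt' h1 (p α)))) (lt_irrefl o) }, ?_, hcof⟩
  intro α hα β hβ
  have h : ∃ α', α' < o ∧ β < (p α').len := ⟨α, hα, hβ⟩
  simp only [SeqFull.val, dif_pos h]
  exact chain_val_eq hp.1 hα h.choose_spec.1 hβ h.choose_spec.2

theorem resPlay_pos {t : SeqLT o v} {p : Play o v} (hp : IsPos t p o) {γ : Ordinal.{u}}
    (hγ : γ ≤ o) : IsPos t (resPlay p γ) γ := by
  refine ⟨fun α β hαβ hβ => ?_, fun h0 => ?_, fun α hα => ?_⟩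
  · rw [resPlay, if_pos (hαβ.trans hβ), resPlay, if_pos hβ]
    exact hp.1 α β hαβ (hβ.trans_le hγ)
  · rw [resPlay, if_pos h0]
    exact hp.2.1 (h0.trans_le hγ)
  · rw [resPlay, if_neg (not_lt.mpr hα)]

end BM
namespace BM

open SeqLT Set Order
open scoped Classical

variable {ν : Cardinal.{u}}

theorem regbdd (hreg : ν.IsRegular) :
    ∀ (γ : Ordinal.{u}) (f : Ordinal.{u} → Ordinal.{u}), γ < ν.ord →
      (∀ α, α < γ → f α < ν.ord) → ∃ b, b < ν.ord ∧ ∀ α, α < γ → f α ≤ b := by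
  intro γ f hγ hf
  set g : γ.ToType → Ordinal.{u} := fun i => f ((Ordinal.ToType.mk (o := γ)).symm i) with hg
  have hb : iSup g < ν.ord := by
    apply Ordinal.iSup_lt_ord
    · rw [Cardinal.mk_toType, hreg.cof_eq]
      exact Cardinal.lt_ord.mp hγ
    · intro i; exact hf _ ((Ordinal.ToType.mk (o := γ)).symm i).2
  refine ⟨iSup g, hb, fun α hα => ?_⟩
  have h : f α = g ((Ordinal.ToType.mk (o := γ)) ⟨α, hα⟩) := by
    rw [hg]; simp
  rw [h]; exact Ordinal.le_iSup g _

theorem add_one_inj {a b : Ordinal.{u}} (h : a + 1 = b + 1) : a = b := by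
  rw [Ordinal.add_one_eq_succ, Ordinal.add_one_eq_succ] at h
  exact succ_injective h

theorem two_mul_inj {a b : Ordinal.{u}} (h : 2 * a = 2 * b) : a = b := by
  rcases lt_trichotomy a b with h' | h' | h'
  · exact absurd h (ne_of_lt ((mul_lt_mul_iff_right₀ zero_lt_two).mpr h'))
  · exact h'
  · exact absurd h.symm (ne_of_lt ((mul_lt_mul_iff_right₀ zero_lt_two).mpr h'))

theorem le_two_mul (δ : Ordinal.{u}) : δ ≤ 2 * δ := by
  calc δ = 1 * δ := (one_mul δ).symm
    _ ≤ 2 * δ := mul_le_mul_left one_le_two δ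

theorem parity_lt (hreg : ν.IsRegular) {δ : Ordinal.{u}} (hδ : δ < ν.ord) (n : ℕ) :
    2 * δ + n < ν.ord := by
  rw [Cardinal.lt_ord, Ordinal.card_add, Ordinal.card_mul, Ordinal.card_nat]
  have hℵ := hreg.aleph0_le
  have h2 : (Ordinal.card 2 : Cardinal) < ν := by
    rw [Ordinal.card_ofNat]
    exact lt_of_lt_of_le (Cardinal.nat_lt_aleph0 2) hℵ
  exact Cardinal.add_lt_of_lt hℵ
    (Cardinal.mul_lt_of_lt hℵ h2 (Cardinal.lt_ord.mp hδ))
    (lt_of_lt_of_le (Cardinal.nat_lt_aleph0 n) hℵ)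

theorem odd_ne_zero {γ δ : Ordinal.{u}} (h : γ = 2 * δ + 1) : γ ≠ 0 := by
  rw [h, Ordinal.add_one_eq_succ]; exact (Order.succ_ne_bot _)

theorem even_two_add (δ : Ordinal.{u}) : EvenOrd (2 * δ + 2) := by
  refine ⟨δ + 1, ?_⟩
  rw [Ordinal.add_one_eq_succ, Ordinal.mul_succ]

end BM
namespace BM

open SeqLT Set Order
open scoped Classical

variable {ν : Cardinal.{u}}

theorem two_mul_add_two_inj {a b : Ordinal.{u}} (h : 2 * a + 2 = 2 * b + 2) : a = b := by
  have h' : 2 * a + 1 + 1 = 2 * b + 1 + 1 := by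
    rw [add_assoc, add_assoc, one_add_one_eq_two]; exact h
  exact two_mul_inj (add_one_inj (add_one_inj h'))

theorem winII_of_meager (hreg : ν.IsRegular) {A : Set (SeqFull ν.ord ν.ord)}
    (hA : MeagerIn A Set.univ) : WinIIStrat (SeqLT.empty ν.ord ν.ord) A := by
  obtain ⟨F, hFnwd, hFU⟩ := hA
  have hℵ := hreg.aleph0_le
  have hlim : Order.IsSuccLimit (ν.ord) := Cardinal.isSuccLimit_ord hℵ
  have h1 : (1 : Ordinal) < ν.ord := Ordinal.one_lt_of_isSuccLimit hlim
  have hv : (0 : Ordinal) < ν.ord := zero_lt_one.trans h1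
  let P : Ordinal.{u} → Play ν.ord ν.ord → SeqLT ν.ord ν.ord → Prop := fun γ p m =>
    (∀ α, α < γ → (p α).slt m) ∧
      ∀ δ (h : δ < ν.ord), γ = 2 * δ + 1 → basicOpen m ∩ F ⟨δ, h⟩ = ∅
  let σ : Strat ν.ord ν.ord := fun γ p => if h : ∃ m, P γ p m then h.choose else SeqLT.empty ν.ord ν.ord
  have hex : ∀ γ, γ < ν.ord → OddOrd γ → ∀ p : Play ν.ord ν.ord, IsPos (SeqLT.empty ν.ord ν.ord) p γ →
      ∃ m, P γ p m := by
    intro γ hγ hodd p hp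
    obtain ⟨δ, rfl⟩ := hodd
    have hδo : δ < ν.ord := lt_of_le_of_lt ((le_two_mul δ).trans (le_of_lt (lt_add_one' _))) hγ
    obtain ⟨m, hm1, hm2⟩ := nwd_avoid h1 hv (hFnwd ⟨δ, hδo⟩) (p (2 * δ))
    obtain ⟨hlen, hslt, hsub⟩ := snoc_spec hlim hv m
    refine ⟨m.snoc 0, fun α hα => ?_, fun δ' h' hγ' => ?_⟩
    · have hα' : α ≤ 2 * δ := by
        rw [Ordinal.add_one_eq_succ] at hα; exact Order.lt_succ_iff.mp hα
      rcases lt_or_eq_of_le hα' with h' | h'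
      · exact slt_trans (hp.1 α (2 * δ) h' (lt_add_one' _)) (le_slt_trans hm1 hslt)
      · rw [h']; exact le_slt_trans hm1 hslt
    · have hδδ : δ' = δ := two_mul_inj (add_one_inj hγ'.symm)
      subst hδδ
      apply eq_empty_iff_forall_notMem.mpr
      intro x hx
      exact (eq_empty_iff_forall_notMem.mp hm2) x ⟨hsub hx.1, hx.2⟩
  have hleg : LegalII (SeqLT.empty ν.ord ν.ord) σ := by
    intro γ hγ hodd p hp
    have h := hex γ hγ hodd p hp
    have hσ : σ γ p = h.choose := dif_pos h
    rw [hσ]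
    obtain ⟨δ, hδ⟩ := hodd
    exact ⟨h.choose_spec.1, fun h0 => absurd h0 (odd_ne_zero hδ)⟩
  refine ⟨σ, hleg, fun p hp hf => ?_⟩
  obtain ⟨x, hx⟩ := exists_outcome hlim hp
  refine ⟨x, hx, fun hxA => ?_⟩
  have hx' : x ∈ ⋃ i, F i := by rw [← hFU]; exact ⟨hxA, mem_univ x⟩
  obtain ⟨⟨δ, hδ⟩, hxi⟩ := mem_iUnion.mp hx'
  have hγ : 2 * δ + 1 < ν.ord := by simpa using parity_lt hreg hδ 1
  have hodd : OddOrd (2 * δ + 1) := ⟨δ, rfl⟩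
  have hpos := resPlay_pos hp (le_of_lt hγ)
  have h := hex _ hγ hodd (resPlay p (2 * δ + 1)) hpos
  have hpγ : p (2 * δ + 1) = h.choose := by
    rw [hf _ hγ hodd]
    exact dif_pos h
  have hdisj := h.choose_spec.2 δ hδ rfl
  have hmem : x ∈ basicOpen (p (2 * δ + 1)) := hx.1 _ hγ
  rw [hpγ] at hmem
  exact (eq_empty_iff_forall_notMem.mp hdisj) x ⟨hmem, hxi⟩

theorem winI_aux (hreg : ν.IsRegular) {A : Set (SeqFull ν.ord ν.ord)}
    (F : {β : Ordinal.{u} // β < ν.ord} → Set (SeqFull ν.ord ν.ord))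
    (hFnwd : ∀ i, NowhereDenseIn (F i) Set.univ)
    (t₀ : SeqLT ν.ord ν.ord)
    (ht₀ : ∀ x, x ∈ basicOpen t₀ → (∀ i, x ∉ F i) → x ∈ A) :
    WinIStrat (SeqLT.empty ν.ord ν.ord) A := by
  have hℵ := hreg.aleph0_le
  have hlim : Order.IsSuccLimit (ν.ord) := Cardinal.isSuccLimit_ord hℵ
  have h1 : (1 : Ordinal) < ν.ord := Ordinal.one_lt_of_isSuccLimit hlim
  have hv : (0 : Ordinal) < ν.ord := zero_lt_one.trans h1
  let P : Ordinal.{u} → Play ν.ord ν.ord → SeqLT ν.ord ν.ord → Prop := fun γ p m =>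
    (∀ α, α < γ → (p α).slt m) ∧
      ∀ δ (h : δ < ν.ord), γ = 2 * δ + 2 → basicOpen m ∩ F ⟨δ, h⟩ = ∅
  let σ : Strat ν.ord ν.ord := fun γ p =>
    if γ = 0 then t₀ else if h : ∃ m, P γ p m then h.choose else SeqLT.empty ν.ord ν.ord
  have hex : ∀ γ, γ < ν.ord → γ ≠ 0 → ∀ p : Play ν.ord ν.ord, IsPos (SeqLT.empty ν.ord ν.ord) p γ →
      ∃ m, P γ p m := by
    intro γ hγ hγ0 p hp
    obtain ⟨w, hw⟩ := exists_ub h1 hv (regbdd hreg) hγ hp.1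
    by_cases hδ : ∃ δ : Ordinal.{u}, γ = 2 * δ + 2
    · obtain ⟨δ, hδeq⟩ := hδ
      have hδo : δ < ν.ord := by
        refine lt_of_le_of_lt ?_ hγ
        rw [hδeq]
        exact (le_two_mul δ).trans le_self_add
      obtain ⟨m, hm1, hm2⟩ := nwd_avoid h1 hv (hFnwd ⟨δ, hδo⟩) w
      obtain ⟨hlen, hslt, hsub⟩ := snoc_spec hlim hv m
      refine ⟨m.snoc 0, fun α hα =>
        le_slt_trans (SeqLT.le_trans (hw α hα) hm1) hslt, fun δ' h' hγ' => ?_⟩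
      have hδδ : δ' = δ := two_mul_add_two_inj (hγ'.symm.trans hδeq)
      subst hδδ
      apply eq_empty_iff_forall_notMem.mpr
      intro x hx
      exact (eq_empty_iff_forall_notMem.mp hm2) x ⟨hsub hx.1, hx.2⟩
    · obtain ⟨hlen, hslt, hsub⟩ := snoc_spec hlim hv w
      exact ⟨w.snoc 0, fun α hα => le_slt_trans (hw α hα) hslt,
        fun δ' h' hγ' => absurd ⟨δ', hγ'⟩ hδ⟩
  have hleg : LegalI (SeqLT.empty ν.ord ν.ord) σ := by
    intro γ hγ _ p hp
    by_cases hγ0 : γ = 0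
    · subst hγ0
      have hσ : σ 0 p = t₀ := if_pos rfl
      rw [hσ]
      exact ⟨fun α hα => absurd hα (not_lt_of_ge (show (0 : Ordinal.{u}) ≤ α from zero_le)), fun _ => empty_le t₀⟩
    · have h := hex γ hγ hγ0 p hp
      have hσ : σ γ p = h.choose := by
        simp only [σ, if_neg hγ0, dif_pos h]
      rw [hσ]
      exact ⟨h.choose_spec.1, fun h0 => absurd h0 hγ0⟩
  refine ⟨σ, hleg, fun p hp hf => ?_⟩
  obtain ⟨x, hx⟩ := exists_outcome hlim hp
  have hp0 : p 0 = t₀ := by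
    rw [hf 0 hv ⟨0, (mul_zero 2).symm⟩]
    exact if_pos rfl
  have hmem0 : x ∈ basicOpen t₀ := by
    rw [← hp0]; exact hx.1 0 hv
  refine ⟨x, hx, ht₀ x hmem0 ?_⟩
  rintro ⟨δ, hδ⟩ hxi
  have hγ : 2 * δ + 2 < ν.ord := by simpa using parity_lt hreg hδ 2
  have hγ0 : (2 * δ + 2 : Ordinal.{u}) ≠ 0 := by
    intro h0
    have h2 : (2 : Ordinal) ≤ 2 * δ + 2 := le_add_self
    rw [h0] at h2
    exact absurd (lt_of_lt_of_le zero_lt_two h2) (lt_irrefl 0)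
  have h := hex _ hγ hγ0 (resPlay p (2 * δ + 2)) (resPlay_pos hp (le_of_lt hγ))
  have hpγ : p (2 * δ + 2) = h.choose := by
    rw [hf _ hγ (even_two_add δ)]
    simp only [σ, if_neg hγ0, dif_pos h]
  have hdisj := h.choose_spec.2 δ hδ rfl
  have hmem : x ∈ basicOpen (p (2 * δ + 2)) := hx.1 _ hγ
  rw [hpγ] at hmem
  exact (eq_empty_iff_forall_notMem.mp hdisj) x ⟨hmem, hxi⟩

end BM
/-- For an infinite regular cardinal `ν` with `ν^{<ν} = ν`, the Banach–Mazur game `G_ν(A)`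
is determined for every `ν`-Baire subset `A` of `ν^ν`. -/
theorem statement17 (ν : Cardinal.{u}) (hreg : ν.IsRegular)
    (hpow : Cardinal.powerlt ν ν = ν)
    (A : Set (SeqFull ν.ord ν.ord)) (hA : BaireSet A) :
    WinIStrat (SeqLT.empty ν.ord ν.ord) A ∨ WinIIStrat (SeqLT.empty ν.ord ν.ord) A := by
  obtain ⟨U, hUopen, hM⟩ := hA
  have hℵ := hreg.aleph0_le
  have hlim : Order.IsSuccLimit (ν.ord) := Cardinal.isSuccLimit_ord hℵ
  have h1 : (1 : Ordinal) < ν.ord := Ordinal.one_lt_of_isSuccLimit hlim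
  rcases Set.eq_empty_or_nonempty U with hU | hU
  · right
    apply BM.winII_of_meager hreg
    have he : symmDiff A U = A := by
      rw [hU, ← Set.bot_eq_empty, symmDiff_bot]
    rwa [he] at hM
  · left
    obtain ⟨x₀, hx₀⟩ := hU
    obtain ⟨V, ⟨t₀, rfl⟩, hxV, hVU⟩ := (BM.isBasis h1).exists_subset_of_mem_open hx₀ hUopen
    obtain ⟨F, hFnwd, hFU⟩ := hM
    apply BM.winI_aux hreg F hFnwd t₀
    intro x hxt hxF
    by_contra hxA
    have hxU : x ∈ U := hVU hxt
    have hxs : x ∈ symmDiff A U := Set.mem_symmDiff.mpr (Or.inr ⟨hxU, hxA⟩)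
    have hxu : x ∈ ⋃ i, F i := by rw [← hFU]; exact ⟨hxs, Set.mem_univ x⟩
    obtain ⟨i, hi⟩ := Set.mem_iUnion.mp hxu
    exact hxF i hi

end
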